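/- Let c₁ be a positive integer and A a positive integer. Let T = #{(B,C) ∈ ℤ² : B² − 4AC = −4c₁², gcd(A,B,C) = 1, 0 ≤ B ≤ A}. For each prime p with p^e exactly dividing A (e = v_p(A) ≥ 1), let s_p be the number of x ∈ {0,1,…,p^e − 1} such that p^e divides x² + c₁² and it is not the case that both p divides x and p divides (x² + c₁²)/p^e. Then ∏_{p | A} s_p ≤ 2T ≤ (∏_{p | A} s_p) + 2, where the product is over the distinct primes dividing A; equivalently 0 ≤ T − (1/2)·∏ s_p ≤ 1. -/

import Mathlib

/-- The tangency count `T`: the number of `(B,C)` with `B² − 4AC = −4c₁²`,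
`gcd(A,B,C) = 1`, `0 ≤ B ≤ A`. -/
noncomputable def T (c₁ A : ℕ) : ℕ :=
  Set.ncard {bc : ℤ × ℤ |
    bc.1 ^ 2 - 4 * (A : ℤ) * bc.2 = -4 * (c₁ : ℤ) ^ 2 ∧
    Int.gcd (Int.gcd (A : ℤ) bc.1 : ℤ) bc.2 = 1 ∧
    0 ≤ bc.1 ∧ bc.1 ≤ (A : ℤ)}

/-- The local solution count `s_p`: the number of `x ∈ {0,…,p^e−1}` with
`p^e ∣ x² + c₁²` and not both `p ∣ x` and `p ∣ (x² + c₁²)/p^e`. -/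
noncomputable def s (c₁ p e : ℕ) : ℕ :=
  Set.ncard {x : ℕ | x < p ^ e ∧ ((p : ℤ) ^ e ∣ (x : ℤ) ^ 2 + (c₁ : ℤ) ^ 2) ∧
    ¬(((p : ℤ) ∣ (x : ℤ)) ∧ ((p : ℤ) ∣ (((x : ℤ) ^ 2 + (c₁ : ℤ) ^ 2) / (p : ℤ) ^ e)))}

open Finset

open scoped Classical in
/-- The global solution set: `x ∈ [0,n)` with `n ∣ x² + c₁²` and, for every prime
`p ∣ n`, not both `p ∣ x` and `p ∣ (x² + c₁²)/n`. -/
noncomputable def G (c₁ n : ℕ) : Finset ℕ :=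
  (Finset.range n).filter (fun x =>
    ((n : ℤ) ∣ (x : ℤ) ^ 2 + (c₁ : ℤ) ^ 2) ∧
    ∀ p : ℕ, p.Prime → p ∣ n →
      ¬(((p : ℤ) ∣ (x : ℤ)) ∧ ((p : ℤ) ∣ (((x : ℤ) ^ 2 + (c₁ : ℤ) ^ 2) / (n : ℤ)))))

lemma mem_G {c₁ n x : ℕ} : x ∈ G c₁ n ↔ x < n ∧
    ((n : ℤ) ∣ (x : ℤ) ^ 2 + (c₁ : ℤ) ^ 2) ∧
    ∀ p : ℕ, p.Prime → p ∣ n →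
      ¬(((p : ℤ) ∣ (x : ℤ)) ∧ ((p : ℤ) ∣ (((x : ℤ) ^ 2 + (c₁ : ℤ) ^ 2) / (n : ℤ)))) := by
  classical
  simp [G, Finset.mem_filter, Finset.mem_range, and_assoc]

/-- Key congruence: the divisibility condition on the quotient only depends on the
residue of `x` modulo `m`, provided `p ∣ x`. -/
lemma quot_congr {c₁ : ℕ} {m p x y : ℤ} (hm : m ≠ 0)
    (hxy : m ∣ x - y) (hx : m ∣ x ^ 2 + (c₁ : ℤ) ^ 2) (hpm : p ∣ m) (hpx : p ∣ x) :
    (p ∣ (x ^ 2 + (c₁ : ℤ) ^ 2) / m ↔ p ∣ (y ^ 2 + (c₁ : ℤ) ^ 2) / m) := by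
  have hsq : m ∣ x ^ 2 - y ^ 2 := by
    have h : x ^ 2 - y ^ 2 = (x - y) * (x + y) := by ring
    rw [h]; exact hxy.mul_right _
  have hy : m ∣ y ^ 2 + (c₁ : ℤ) ^ 2 := by
    have h : y ^ 2 + (c₁ : ℤ) ^ 2 = (x ^ 2 + (c₁ : ℤ) ^ 2) - (x ^ 2 - y ^ 2) := by ring
    rw [h]; exact dvd_sub hx hsq
  obtain ⟨q, hq⟩ := hy
  obtain ⟨k, hk⟩ := hxy
  have hX : x ^ 2 + (c₁ : ℤ) ^ 2 = m * (q + k * (x + y)) := by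
    linear_combination hq + (x + y) * hk
  have hqdiv : (x ^ 2 + (c₁ : ℤ) ^ 2) / m = q + k * (x + y) := by
    rw [hX, Int.mul_ediv_cancel_left _ hm]
  have hq2 : (y ^ 2 + (c₁ : ℤ) ^ 2) / m = q := by
    rw [hq, Int.mul_ediv_cancel_left _ hm]
  have hpy : p ∣ y := by
    have h1 : p ∣ x - y := hpm.trans ⟨k, hk⟩
    have h2 : p ∣ x - (x - y) := dvd_sub hpx h1
    simpa using h2
  have hpxy : p ∣ k * (x + y) := (dvd_add hpx hpy).mul_left k
  rw [hqdiv, hq2]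
  constructor
  · intro h; have h2 := dvd_sub h hpxy; simpa using h2
  · intro h; exact dvd_add h hpxy


/-- Exact division scaling: if `m*n ∣ z` then `z/m = n * (z/(m*n))`. -/
lemma div_scale {m n z : ℤ} (hm : m ≠ 0) (hn : n ≠ 0) (h : m * n ∣ z) :
    z / m = n * (z / (m * n)) := by
  obtain ⟨w, rfl⟩ := h
  rw [Int.mul_ediv_cancel_left _ (mul_ne_zero hm hn), mul_assoc,
    Int.mul_ediv_cancel_left _ hm]

/-- If `4 ∣ x² + c₁²` then `x` is even. -/
lemma two_lem {c₁ x : ℕ} (h4 : (4 : ℤ) ∣ (x : ℤ) ^ 2 + (c₁ : ℤ) ^ 2) :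
    (2 : ℤ) ∣ (x : ℤ) := by
  rcases Nat.even_or_odd x with ⟨k, hk⟩ | ⟨k, hk⟩
  · exact ⟨(k : ℤ), by push_cast [hk]; ring⟩
  · exfalso
    obtain ⟨t, ht⟩ := h4
    rcases Nat.even_or_odd c₁ with ⟨j, hj⟩ | ⟨j, hj⟩
    · have key : (4 : ℤ) * t = 4 * ((k:ℤ)*k + k + (j:ℤ)*j) + 1 := by
        rw [← ht]; push_cast [hk, hj]; ring
      generalize (k:ℤ)*k + k + (j:ℤ)*j = a at key
      omega
    · have key : (4 : ℤ) * t = 4 * ((k:ℤ)*k + k + (j:ℤ)*j + j) + 2 := by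
        rw [← ht]; push_cast [hk, hj]; ring
      generalize (k:ℤ)*k + k + (j:ℤ)*j + j = a at key
      omega

/-- Translation between the gcd condition and the prime-by-prime condition. -/
lemma gcd_iff {c₁ A x : ℕ} (hA : 0 < A) (hdvd : (A:ℤ) ∣ (x:ℤ)^2 + (c₁:ℤ)^2) :
    (Int.gcd (Int.gcd (A:ℤ) (2*(x:ℤ)) : ℤ) (((x:ℤ)^2 + (c₁:ℤ)^2) / (A:ℤ)) = 1) ↔
    ∀ p : ℕ, p.Prime → p ∣ A →
      ¬(((p:ℤ) ∣ (x:ℤ)) ∧ ((p:ℤ) ∣ (((x:ℤ)^2 + (c₁:ℤ)^2) / (A:ℤ)))) := by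
  set q : ℤ := ((x:ℤ)^2 + (c₁:ℤ)^2) / (A:ℤ) with hqdef
  have hAne : (A:ℤ) ≠ 0 := by exact_mod_cast hA.ne'
  constructor
  · rintro h1 p hp hpA ⟨hpx, hpq⟩
    have h2 : (p:ℤ) ∣ (Int.gcd (A:ℤ) (2*(x:ℤ)) : ℤ) :=
      Int.dvd_coe_gcd (Int.natCast_dvd_natCast.mpr hpA) (hpx.mul_left 2)
    have h3 : (p:ℤ) ∣ (Int.gcd (Int.gcd (A:ℤ) (2*(x:ℤ)) : ℤ) q : ℤ) :=
      Int.dvd_coe_gcd h2 hpq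
    rw [h1] at h3
    have h4 : (p:ℤ) ≤ 1 := Int.le_of_dvd one_pos (by exact_mod_cast h3)
    have := hp.two_le
    omega
  · intro h
    by_contra hg
    obtain ⟨p, hp, hpg⟩ := Nat.exists_prime_and_dvd hg
    have hp1 : (p:ℤ) ∣ (Int.gcd (A:ℤ) (2*(x:ℤ)) : ℤ) :=
      dvd_trans (Int.natCast_dvd_natCast.mpr hpg) (Int.gcd_dvd_left _ _)
    have hpA' : (p:ℤ) ∣ (A:ℤ) := hp1.trans (Int.gcd_dvd_left _ _)
    have hp2x : (p:ℤ) ∣ 2*(x:ℤ) := hp1.trans (Int.gcd_dvd_right _ _)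
    have hpq : (p:ℤ) ∣ q :=
      dvd_trans (Int.natCast_dvd_natCast.mpr hpg) (Int.gcd_dvd_right _ _)
    have hpA : p ∣ A := Int.natCast_dvd_natCast.mp hpA'
    have hpx : (p:ℤ) ∣ (x:ℤ) := by
      rcases ((Nat.prime_iff_prime_int.mp hp).dvd_mul.mp hp2x) with h2 | hx
      · -- p ∣ 2, so p = 2
        have hp2 : p = 2 := by
          have : p ∣ 2 := Int.natCast_dvd_natCast.mp (by exact_mod_cast h2)
          exact (Nat.prime_dvd_prime_iff_eq hp Nat.prime_two).mp this
        subst hp2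
        have hAq : (A:ℤ) * q = (x:ℤ)^2 + (c₁:ℤ)^2 := Int.mul_ediv_cancel' hdvd
        have h4 : (4:ℤ) ∣ (x:ℤ)^2 + (c₁:ℤ)^2 := by
          rw [← hAq]
          obtain ⟨a, ha⟩ := hpA'
          obtain ⟨b, hb⟩ := hpq
          exact ⟨a * b, by rw [ha, hb]; push_cast; ring⟩
        exact two_lem h4
      · exact hx
    exact h p hp hpA ⟨hpx, hpq⟩

/-- `s` agrees with the cardinality of `G` at prime powers. -/
lemma s_eq_G {c₁ p e : ℕ} (hp : p.Prime) (he : 0 < e) :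
    s c₁ p e = (G c₁ (p ^ e)).card := by
  rw [s, ← Set.ncard_coe_finset]
  congr 1
  ext x
  simp only [Finset.mem_coe, mem_G, Set.mem_setOf_eq]
  have hcast : ((p ^ e : ℕ) : ℤ) = (p : ℤ) ^ e := by push_cast; ring
  rw [hcast]
  constructor
  · rintro ⟨h1, h2, h3⟩
    refine ⟨h1, h2, ?_⟩
    intro q hq hqpe
    have : q = p := by
      have hq' : q ∣ p := hq.dvd_of_dvd_pow hqpe
      exact (Nat.prime_dvd_prime_iff_eq hq hp).mp hq'
    subst this
    exact h3
  · rintro ⟨h1, h2, h3⟩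
    exact ⟨h1, h2, h3 p hp (dvd_pow_self p he.ne')⟩

lemma G_one (c₁ : ℕ) : (G c₁ 1).card = 1 := by
  have : G c₁ 1 = {0} := by
    ext x
    simp only [mem_G, Finset.mem_singleton, Nat.lt_one_iff]
    constructor
    · rintro ⟨h, -⟩; exact h
    · rintro rfl
      refine ⟨rfl, one_dvd _, ?_⟩
      intro p hp hp1
      exact absurd (Nat.dvd_one.mp hp1) hp.one_lt.ne'
  rw [this, Finset.card_singleton]

/-- The local condition at a prime `p ∣ m` only depends on `x` mod `m`. -/
lemma local_cond_iff {c₁ m n p : ℕ} {x y : ℤ} (hp : p.Prime) (hm : 0 < m) (hn : 0 < n)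
    (hco : m.Coprime n) (hpm : p ∣ m)
    (hxy : (m:ℤ) ∣ x - y) (hdvd : (m:ℤ) * (n:ℤ) ∣ x^2 + (c₁:ℤ)^2) :
    ((p:ℤ) ∣ x ∧ (p:ℤ) ∣ (x^2 + (c₁:ℤ)^2) / ((m:ℤ) * (n:ℤ))) ↔
    ((p:ℤ) ∣ y ∧ (p:ℤ) ∣ (y^2 + (c₁:ℤ)^2) / (m:ℤ)) := by
  have hmne : (m:ℤ) ≠ 0 := by exact_mod_cast hm.ne'
  have hnne : (n:ℤ) ≠ 0 := by exact_mod_cast hn.ne'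
  have hpm' : (p:ℤ) ∣ (m:ℤ) := Int.natCast_dvd_natCast.mpr hpm
  have hmdvd : (m:ℤ) ∣ x^2 + (c₁:ℤ)^2 := (dvd_mul_right (m:ℤ) (n:ℤ)).trans hdvd
  have hpn : ¬ ((p:ℤ) ∣ (n:ℤ)) := by
    intro hcon
    have : p ∣ n := Int.natCast_dvd_natCast.mp hcon
    have : p ∣ 1 := (Nat.dvd_gcd hpm this).trans (dvd_of_eq hco)
    exact absurd (Nat.dvd_one.mp this) hp.one_lt.ne'
  have hscale : (x^2 + (c₁:ℤ)^2) / (m:ℤ) = (n:ℤ) * ((x^2 + (c₁:ℤ)^2) / ((m:ℤ) * (n:ℤ))) :=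
    div_scale hmne hnne hdvd
  have hxyiff : (p:ℤ) ∣ x ↔ (p:ℤ) ∣ y := by
    have h1 : (p:ℤ) ∣ x - y := hpm'.trans hxy
    constructor
    · intro h; have := dvd_sub h h1; simpa using this
    · intro h; have := dvd_add h h1; simpa using this
  constructor
  · rintro ⟨hpx, hpq⟩
    refine ⟨hxyiff.mp hpx, ?_⟩
    have h1 : (p:ℤ) ∣ (x^2 + (c₁:ℤ)^2) / (m:ℤ) := by
      rw [hscale]; exact hpq.mul_left _
    exact (quot_congr hmne hxy hmdvd hpm' hpx).mp h1
  · rintro ⟨hpy, hpq⟩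
    have hpx : (p:ℤ) ∣ x := hxyiff.mpr hpy
    refine ⟨hpx, ?_⟩
    have h1 : (p:ℤ) ∣ (x^2 + (c₁:ℤ)^2) / (m:ℤ) :=
      (quot_congr hmne hxy hmdvd hpm' hpx).mpr hpq
    rw [hscale] at h1
    exact ((Nat.prime_iff_prime_int.mp hp).dvd_mul.mp h1).resolve_left hpn

lemma mod_sub_dvd (x m : ℕ) : (m:ℤ) ∣ (x:ℤ) - ((x % m : ℕ) : ℤ) := by
  refine ⟨((x / m : ℕ) : ℤ), ?_⟩
  have h : (x:ℤ) = ((x % m : ℕ) : ℤ) + (m:ℤ) * ((x / m : ℕ) : ℤ) := by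
    exact_mod_cast (Nat.mod_add_div x m).symm
  rw [h]; ring

lemma G_proj {c₁ m n x : ℕ} (hm : 0 < m) (hn : 0 < n) (hco : m.Coprime n)
    (hx : x ∈ G c₁ (m * n)) : x % m ∈ G c₁ m := by
  rw [mem_G] at hx ⊢
  obtain ⟨hlt, hdvd, hP⟩ := hx
  have hdvd' : (m:ℤ) * (n:ℤ) ∣ (x:ℤ)^2 + (c₁:ℤ)^2 := by push_cast at hdvd ⊢; exact hdvd
  have hxy := mod_sub_dvd x m
  have hmdvd : (m:ℤ) ∣ (x:ℤ)^2 + (c₁:ℤ)^2 := (dvd_mul_right (m:ℤ) (n:ℤ)).trans hdvd'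
  have hydvd : (m:ℤ) ∣ ((x % m : ℕ):ℤ)^2 + (c₁:ℤ)^2 := by
    have hsq : (m:ℤ) ∣ (x:ℤ)^2 - ((x % m : ℕ):ℤ)^2 := by
      have h : (x:ℤ)^2 - ((x % m : ℕ):ℤ)^2
          = ((x:ℤ) - ((x % m : ℕ):ℤ)) * ((x:ℤ) + ((x % m : ℕ):ℤ)) := by ring
      rw [h]; exact hxy.mul_right _
    have h : ((x % m : ℕ):ℤ)^2 + (c₁:ℤ)^2
        = ((x:ℤ)^2 + (c₁:ℤ)^2) - ((x:ℤ)^2 - ((x % m : ℕ):ℤ)^2) := by ring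
    rw [h]; exact dvd_sub hmdvd hsq
  refine ⟨Nat.mod_lt _ hm, hydvd, ?_⟩
  intro p hp hpm hcon
  have h := (local_cond_iff (c₁ := c₁) hp hm hn hco hpm hxy hdvd').mpr hcon
  have hpmn : p ∣ m * n := hpm.mul_right n
  apply hP p hp hpmn
  have hcast : ((m * n : ℕ) : ℤ) = (m:ℤ) * (n:ℤ) := by push_cast; ring
  rw [hcast]
  exact h

lemma G_glue {c₁ m n x : ℕ} (hm : 0 < m) (hn : 0 < n) (hco : m.Coprime n)
    (hxm : x % m ∈ G c₁ m) (hxn : x % n ∈ G c₁ n) (hlt : x < m * n) :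
    x ∈ G c₁ (m * n) := by
  rw [mem_G] at hxm hxn ⊢
  obtain ⟨-, hdm, hPm⟩ := hxm
  obtain ⟨-, hdn, hPn⟩ := hxn
  have sqdvd : ∀ k : ℕ, 0 < k → (k:ℤ) ∣ ((x % k : ℕ):ℤ)^2 + (c₁:ℤ)^2 →
      (k:ℤ) ∣ (x:ℤ)^2 + (c₁:ℤ)^2 := by
    intro k hk hdk
    have hxy := mod_sub_dvd x k
    have hsq : (k:ℤ) ∣ (x:ℤ)^2 - ((x % k : ℕ):ℤ)^2 := by
      have h : (x:ℤ)^2 - ((x % k : ℕ):ℤ)^2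
          = ((x:ℤ) - ((x % k : ℕ):ℤ)) * ((x:ℤ) + ((x % k : ℕ):ℤ)) := by ring
      rw [h]; exact hxy.mul_right _
    have h : (x:ℤ)^2 + (c₁:ℤ)^2
        = (((x % k : ℕ):ℤ)^2 + (c₁:ℤ)^2) + ((x:ℤ)^2 - ((x % k : ℕ):ℤ)^2) := by ring
    rw [h]; exact dvd_add hdk hsq
  have hdm' := sqdvd m hm hdm
  have hdn' := sqdvd n hn hdn
  have hdvd' : (m:ℤ) * (n:ℤ) ∣ (x:ℤ)^2 + (c₁:ℤ)^2 := by
    have hiso : IsCoprime (m:ℤ) (n:ℤ) := Nat.isCoprime_iff_coprime.mpr hco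
    exact hiso.mul_dvd hdm' hdn'
  have hcast : ((m * n : ℕ) : ℤ) = (m:ℤ) * (n:ℤ) := by push_cast; ring
  refine ⟨hlt, by rw [hcast]; exact hdvd', ?_⟩
  intro p hp hpmn hcon
  rw [hcast] at hcon
  rcases (Nat.Prime.dvd_mul hp).mp hpmn with hpm | hpn
  · exact hPm p hp hpm
      ((local_cond_iff (c₁ := c₁) hp hm hn hco hpm (mod_sub_dvd x m) hdvd').mp hcon)
  · rw [mul_comm (m:ℤ) (n:ℤ)] at hcon hdvd'
    exact hPn p hp hpn
      ((local_cond_iff (c₁ := c₁) hp hn hm hco.symm hpn (mod_sub_dvd x n) hdvd').mp hcon)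

lemma G_card_mult (c₁ : ℕ) : ∀ m n : ℕ, Nat.Coprime m n →
    (G c₁ (m * n)).card = (G c₁ m).card * (G c₁ n).card := by
  intro m n hco
  rcases Nat.eq_zero_or_pos m with rfl | hm
  · have hn1 : n = 1 := Nat.coprime_zero_left n |>.mp hco
    subst hn1
    simp [G]
  rcases Nat.eq_zero_or_pos n with rfl | hn
  · have hm1 : m = 1 := Nat.coprime_zero_right m |>.mp hco
    subst hm1
    simp [G]
  rw [← Finset.card_product]
  apply Finset.card_bij' (fun x _ => (x % m, x % n))
    (fun y _ => (Nat.chineseRemainder hco y.1 y.2 : ℕ))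
  · intro x hx
    rw [Finset.mem_product]
    exact ⟨G_proj hm hn hco hx, by
      rw [mul_comm] at hx
      exact G_proj hn hm hco.symm hx⟩
  · intro y hy
    rw [Finset.mem_product] at hy
    obtain ⟨hy1, hy2⟩ := hy
    set w := (Nat.chineseRemainder hco y.1 y.2 : ℕ) with hw
    have hcr := (Nat.chineseRemainder hco y.1 y.2).2
    have hwlt : w < m * n :=
      Nat.chineseRemainder_lt_mul hco y.1 y.2 hm.ne' hn.ne'
    have h1 : w % m = y.1 := by
      have h := hcr.1
      rwa [Nat.ModEq, Nat.mod_eq_of_lt (mem_G.mp hy1).1] at h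
    have h2 : w % n = y.2 := by
      have h := hcr.2
      rwa [Nat.ModEq, Nat.mod_eq_of_lt (mem_G.mp hy2).1] at h
    exact G_glue hm hn hco (h1 ▸ hy1) (h2 ▸ hy2) hwlt
  · intro x hx
    have hxlt : x < m * n := (mem_G.mp hx).1
    set w := (Nat.chineseRemainder hco (x % m) (x % n) : ℕ) with hw
    have hcr := (Nat.chineseRemainder hco (x % m) (x % n)).2
    have hwlt : w < m * n :=
      Nat.chineseRemainder_lt_mul hco (x % m) (x % n) hm.ne' hn.ne'
    have hmod : w ≡ x [MOD m * n] := by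
      refine (Nat.modEq_and_modEq_iff_modEq_mul hco).mp ⟨?_, ?_⟩
      · exact hcr.1.trans (Nat.mod_modEq x m)
      · exact hcr.2.trans (Nat.mod_modEq x n)
    exact (Nat.ModEq.eq_of_lt_of_lt hmod hwlt hxlt)
  · intro y hy
    rw [Finset.mem_product] at hy
    have h1 : (Nat.chineseRemainder hco y.1 y.2 : ℕ) % m = y.1 := by
      have h := (Nat.chineseRemainder hco y.1 y.2).2.1
      rwa [Nat.ModEq, Nat.mod_eq_of_lt (mem_G.mp hy.1).1] at h
    have h2 : (Nat.chineseRemainder hco y.1 y.2 : ℕ) % n = y.2 := by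
      have h := (Nat.chineseRemainder hco y.1 y.2).2.2
      rwa [Nat.ModEq, Nat.mod_eq_of_lt (mem_G.mp hy.2).1] at h
    simp [h1, h2]


lemma G_card_eq_prod (c₁ A : ℕ) (hA : A ≠ 0) :
    (G c₁ A).card = ∏ p ∈ A.primeFactors, (G c₁ (p ^ A.factorization p)).card := by
  have h := Nat.multiplicative_factorization (fun n => (G c₁ n).card)
    (fun x y hxy => G_card_mult c₁ x y hxy) (G_one c₁) hA
  exact h.trans (Nat.prod_factorization_eq_prod_primeFactors _)

lemma prod_s_eq (c₁ A : ℕ) (hA : 0 < A) :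
    (∏ p ∈ A.primeFactors, s c₁ p (A.factorization p)) = (G c₁ A).card := by
  rw [G_card_eq_prod c₁ A hA.ne']
  refine Finset.prod_congr rfl ?_
  intro p hp
  have hpp : p.Prime := Nat.prime_of_mem_primeFactors hp
  have hdvd : p ∣ A := Nat.dvd_of_mem_primeFactors hp
  have hepos : 0 < A.factorization p := hpp.factorization_pos_of_dvd hA.ne' hdvd
  exact s_eq_G hpp hepos

lemma G_invol {c₁ A x : ℕ} (hA : 0 < A) (hx : x ∈ G c₁ A) (hx0 : 0 < x) :
    A - x ∈ G c₁ A := by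
  rw [mem_G] at hx ⊢
  obtain ⟨hlt, hdvd, hP⟩ := hx
  have hxle : x ≤ A := hlt.le
  have hcast : ((A - x : ℕ) : ℤ) = (A:ℤ) - (x:ℤ) := by
    push_cast [hxle]; ring
  have hAne : (A:ℤ) ≠ 0 := by exact_mod_cast hA.ne'
  have hXdvd : (A:ℤ) ∣ ((A:ℤ) - (x:ℤ))^2 + (c₁:ℤ)^2 := by
    have h : ((A:ℤ) - (x:ℤ))^2 + (c₁:ℤ)^2
        = ((x:ℤ)^2 + (c₁:ℤ)^2) + (A:ℤ) * ((A:ℤ) - 2*(x:ℤ)) := by ring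
    rw [h]; exact dvd_add hdvd ⟨_, rfl⟩
  refine ⟨by omega, by rw [hcast]; exact hXdvd, ?_⟩
  intro p hp hpA hcon
  rw [hcast] at hcon
  obtain ⟨hpy, hpq⟩ := hcon
  have hpA' : (p:ℤ) ∣ (A:ℤ) := Int.natCast_dvd_natCast.mpr hpA
  have hpx : (p:ℤ) ∣ (x:ℤ) := by
    have h := dvd_sub hpA' hpy; simpa using h
  apply hP p hp hpA
  refine ⟨hpx, ?_⟩
  have hsub : (A:ℤ) ∣ ((A:ℤ) - (x:ℤ)) - (-(x:ℤ)) := ⟨1, by ring⟩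
  have h := (quot_congr hAne hsub hXdvd hpA' hpy).mp hpq
  rwa [neg_pow, show ((-1:ℤ))^2 = 1 by norm_num, one_mul] at h

open scoped Classical in
lemma T_eq (c₁ A : ℕ) (hA : 0 < A) :
    T c₁ A = ((G c₁ A).filter (fun x => 2 * x ≤ A)).card := by
  classical
  set D := (G c₁ A).filter (fun x => 2 * x ≤ A) with hD
  have hAne : (A:ℤ) ≠ 0 := by exact_mod_cast hA.ne'
  set e : ℕ → ℤ × ℤ := fun x => (2*(x:ℤ), ((x:ℤ)^2 + (c₁:ℤ)^2) / (A:ℤ)) with he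
  have hset : {bc : ℤ × ℤ |
      bc.1 ^ 2 - 4 * (A : ℤ) * bc.2 = -4 * (c₁ : ℤ) ^ 2 ∧
      Int.gcd (Int.gcd (A : ℤ) bc.1 : ℤ) bc.2 = 1 ∧
      0 ≤ bc.1 ∧ bc.1 ≤ (A : ℤ)} = ↑(D.image e) := by
    ext ⟨B, C⟩
    simp only [Set.mem_setOf_eq, Finset.coe_image, Set.mem_image, Finset.mem_coe]
    constructor
    · rintro ⟨heq, hgcd, hB0, hBA⟩
      have h4 : (4:ℤ) ∣ B^2 := ⟨(A:ℤ)*C - (c₁:ℤ)^2, by linear_combination heq⟩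
      have h2 : (2:ℤ) ∣ B := by
        have h2' : (2:ℤ) ∣ B^2 := dvd_trans ⟨2, by norm_num⟩ h4
        exact Int.prime_two.dvd_of_dvd_pow h2'
      obtain ⟨b, rfl⟩ := h2
      have hb0 : 0 ≤ b := by linarith
      set x := b.toNat with hx
      have hbx : (x:ℤ) = b := Int.toNat_of_nonneg hb0
      have hAC : (b:ℤ)^2 + (c₁:ℤ)^2 = (A:ℤ) * C := by
        have h4' : (4:ℤ) * ((b:ℤ)^2 + (c₁:ℤ)^2) = 4 * ((A:ℤ) * C) := by linear_combination heq
        exact mul_left_cancel₀ (by norm_num : (4:ℤ) ≠ 0) h4' 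
      have hdvd : (A:ℤ) ∣ (x:ℤ)^2 + (c₁:ℤ)^2 := ⟨C, by rw [hbx]; exact hAC⟩
      have hC : ((x:ℤ)^2 + (c₁:ℤ)^2) / (A:ℤ) = C := by
        rw [hbx, hAC, Int.mul_ediv_cancel_left _ hAne]
      have h2xA : 2 * x ≤ A := by
        have : 2 * (x:ℤ) ≤ (A:ℤ) := by rw [hbx]; linarith
        exact_mod_cast this
      have hxA : x < A := by omega
      have hPred : ∀ p : ℕ, p.Prime → p ∣ A →
          ¬(((p:ℤ) ∣ (x:ℤ)) ∧ ((p:ℤ) ∣ (((x:ℤ)^2 + (c₁:ℤ)^2) / (A:ℤ)))) := by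
        refine (gcd_iff hA hdvd).mp ?_
        rw [show 2*(x:ℤ) = 2*b by rw [hbx], hC]
        exact hgcd
      refine ⟨x, ?_, ?_⟩
      · rw [hD, Finset.mem_filter, mem_G]
        exact ⟨⟨hxA, hdvd, hPred⟩, h2xA⟩
      · rw [he]
        simp only [Prod.mk.injEq]
        exact ⟨by rw [hbx], hC⟩
    · rintro ⟨x, hxD, heq2⟩
      simp only [he, Prod.mk.injEq] at heq2
      obtain ⟨rfl, rfl⟩ := heq2
      rw [hD, Finset.mem_filter, mem_G] at hxD
      obtain ⟨⟨hxA, hdvd, hPred⟩, h2xA⟩ := hxD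
      have ht := Int.mul_ediv_cancel' hdvd
      refine ⟨by linear_combination (-4:ℤ) * ht, ?_, ?_, ?_⟩
      · exact (gcd_iff hA hdvd).mpr hPred
      · positivity
      · exact_mod_cast h2xA
  rw [T, hset, Set.ncard_coe_finset]
  apply Finset.card_image_of_injOn
  intro a _ b _ hab
  have h := congrArg Prod.fst hab
  dsimp [e] at h
  exact_mod_cast mul_left_cancel₀ (two_ne_zero) h

theorem tangency_number_local_product (c₁ A : ℕ) (hc : 0 < c₁) (hA : 0 < A) :
    (∏ p ∈ A.primeFactors, s c₁ p (A.factorization p)) ≤ 2 * T c₁ A ∧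
    2 * T c₁ A ≤ (∏ p ∈ A.primeFactors, s c₁ p (A.factorization p)) + 2 := by
  rw [T_eq c₁ A hA, prod_s_eq c₁ A hA]
  have hmemG : ∀ x ∈ G c₁ A, x < A := fun x hx => (mem_G.mp hx).1
  have hsplit : ((G c₁ A).filter (fun x => 2 * x ≤ A)).card
      + ((G c₁ A).filter (fun x => ¬ 2 * x ≤ A)).card = (G c₁ A).card :=
    Finset.card_filter_add_card_filter_not _
  have hUD : ((G c₁ A).filter (fun x => ¬ 2 * x ≤ A)).card
      ≤ ((G c₁ A).filter (fun x => 2 * x ≤ A)).card := by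
    apply Finset.card_le_card_of_injOn (fun x => A - x)
    · intro x hx
      rw [Finset.mem_coe, Finset.mem_filter] at hx
      obtain ⟨hxG, hx2⟩ := hx
      have hxlt := hmemG x hxG
      have hx0 : 0 < x := by omega
      rw [Finset.mem_coe, Finset.mem_filter]
      exact ⟨G_invol hA hxG hx0, by dsimp only; omega⟩
    · intro a ha b hb hab
      have ha' := hmemG a (Finset.mem_filter.mp ha).1
      have hb' := hmemG b (Finset.mem_filter.mp hb).1
      simp only at hab
      omega
  have hDU : ((G c₁ A).filter (fun x => 2 * x ≤ A)).card
      ≤ ((G c₁ A).filter (fun x => ¬ 2 * x ≤ A)).card + 2 := by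
    have h1 : (((G c₁ A).filter (fun x => 2 * x ≤ A)).filter
        (fun x => 0 < x ∧ 2 * x < A)).card
        ≤ ((G c₁ A).filter (fun x => ¬ 2 * x ≤ A)).card := by
      apply Finset.card_le_card_of_injOn (fun x => A - x)
      · intro x hx
        rw [Finset.mem_coe, Finset.mem_filter, Finset.mem_filter] at hx
        obtain ⟨⟨hxG, hx2⟩, hx0, hx2'⟩ := hx
        have hxlt := hmemG x hxG
        rw [Finset.mem_coe, Finset.mem_filter]
        exact ⟨G_invol hA hxG hx0, by dsimp only; omega⟩
      · intro a ha b hb hab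
        have ha' := hmemG a (Finset.mem_filter.mp (Finset.mem_filter.mp ha).1).1
        have hb' := hmemG b (Finset.mem_filter.mp (Finset.mem_filter.mp hb).1).1
        simp only at hab
        omega
    have hsp : (((G c₁ A).filter (fun x => 2 * x ≤ A)).filter
        (fun x => 0 < x ∧ 2 * x < A)).card
        + (((G c₁ A).filter (fun x => 2 * x ≤ A)).filter
          (fun x => ¬(0 < x ∧ 2 * x < A))).card
        = ((G c₁ A).filter (fun x => 2 * x ≤ A)).card :=
      Finset.card_filter_add_card_filter_not _
    have hsub : ((G c₁ A).filter (fun x => 2 * x ≤ A)).filter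
        (fun x => ¬(0 < x ∧ 2 * x < A)) ⊆ {0, A / 2} := by
      intro x hx
      rw [Finset.mem_filter] at hx
      obtain ⟨hxD, hnot⟩ := hx
      have hx2 : 2 * x ≤ A := (Finset.mem_filter.mp hxD).2
      simp only [Finset.mem_insert, Finset.mem_singleton]
      omega
    have hle := Finset.card_le_card hsub
    have hcard2 : ({0, A / 2} : Finset ℕ).card ≤ 2 :=
      (Finset.card_insert_le _ _).trans (by simp)
    omega
  omega
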